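/- Let B ⊂ ℝ^d be bounded and suppose there exist positive constants R, L, H such that for each x ∈ B, all u,v,w ∈ B_R(x) and h ∈ [0,H), f̃ satisfies f̃(x,x,0) = f(x), |f̃(u,v,h) − f̃(w,v,h)| ≤ L|u−w|, |f̃(u,v,h) − f̃(u,w,h)| ≤ L|v−w|, and |f̃(x,x,h) − f̃(x,x,0)| ≤ Lh|i(x)|. Let R' := max{R, 10L} and H' := min{H, 1/(10L), 1/(6C₂R'), 1/((36C₂+6)L)}. Then for each fixed x ∈ B and h ∈ [0,H') there exists a unique y ∈ B_{6R'}(x) such that y = x + h f̃(x,y,h). -/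

import Mathlib

open scoped RealInnerProductSpace

noncomputable section

/-- Membership in the ball `B_R(x) = {z : ‖z − x‖ ≤ ‖i x‖ / R}`. -/
def InBall {d : ℕ} (i : EuclideanSpace ℝ (Fin d) → EuclideanSpace ℝ (Fin d)) (R : ℝ)
    (x z : EuclideanSpace ℝ (Fin d)) : Prop :=
  ‖z - x‖ ≤ ‖i x‖ / R

/-- The consistency and local Lipschitz conditions at the point `x` for an approximation
`g(·,·,·)` of `target` (conditions (11z)/(12z) of the paper, with balls measured via `i`). -/
def ConsistAt {d : ℕ} (i target : EuclideanSpace ℝ (Fin d) → EuclideanSpace ℝ (Fin d))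
    (x : EuclideanSpace ℝ (Fin d)) (R L H : ℝ)
    (g : EuclideanSpace ℝ (Fin d) → EuclideanSpace ℝ (Fin d) → ℝ → EuclideanSpace ℝ (Fin d)) :
    Prop :=
  g x x 0 = target x ∧
    ∀ h : ℝ, 0 ≤ h → h < H →
      (∀ u v w, InBall i R x u → InBall i R x v → InBall i R x w →
        ‖g u v h - g w v h‖ ≤ L * ‖u - w‖ ∧ ‖g u v h - g u w h‖ ≤ L * ‖v - w‖) ∧
      ‖g x x h - g x x 0‖ ≤ L * h * ‖i x‖

/-- The discrete gradient step equation `x' = x + h S̃(x,x',h) ī(x,x')`, where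
`S̃ = (f̃ ĩᵀ − ĩ f̃ᵀ)/(î·ĭ)`, so that
`S̃ ī = ((ĩ·ī) f̃ − (f̃·ī) ĩ)/(î·ĭ)`. -/
def DGEq {d : ℕ}
    (ftil itil ihat ibrev :
      EuclideanSpace ℝ (Fin d) → EuclideanSpace ℝ (Fin d) → ℝ → EuclideanSpace ℝ (Fin d))
    (ibar : EuclideanSpace ℝ (Fin d) → EuclideanSpace ℝ (Fin d) → EuclideanSpace ℝ (Fin d))
    (x : EuclideanSpace ℝ (Fin d)) (h : ℝ) (x' : EuclideanSpace ℝ (Fin d)) : Prop :=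
  x' = x + (h / ⟪ihat x x' h, ibrev x x' h⟫) •
    (⟪itil x x' h, ibar x x'⟫ • ftil x x' h - ⟪ftil x x' h, ibar x x'⟫ • itil x x' h)

set_option maxHeartbeats 1000000 in
/-- Lemma: existence and uniqueness for `y = x + h f̃(x,y,h)`. -/
theorem underlying_method_exists_unique {d : ℕ}
    (f : EuclideanSpace ℝ (Fin d) → EuclideanSpace ℝ (Fin d))
    (I : EuclideanSpace ℝ (Fin d) → ℝ)
    (i : EuclideanSpace ℝ (Fin d) → EuclideanSpace ℝ (Fin d))
    (hgrad : ∀ x, HasGradientAt I (i x) x)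
    (B : Set (EuclideanSpace ℝ (Fin d))) (hB : Bornology.IsBounded B)
    (C₁ : ℝ) (hC₁ : 0 < C₁) (hfC : ∀ x ∈ B, ‖f x‖ ≤ C₁ * ‖i x‖)
    (R L H : ℝ) (hR : 0 < R) (hL : 0 < L) (hH : 0 < H)
    (ftil : EuclideanSpace ℝ (Fin d) → EuclideanSpace ℝ (Fin d) → ℝ → EuclideanSpace ℝ (Fin d))
    (hftil : ∀ x ∈ B, ConsistAt i f x R L H ftil)
    (R' H' : ℝ) (hR' : R' = max R (10 * L))
    (hH' : H' = min H (min (1 / (10 * L))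
      (min (1 / (6 * (C₁ + 1/5) * R')) (1 / ((36 * (C₁ + 1/5) + 6) * L))))) :
    ∀ x ∈ B, ∀ h : ℝ, 0 ≤ h → h < H' →
      ∃! y : EuclideanSpace ℝ (Fin d), InBall i (6 * R') x y ∧ y = x + h • ftil x y h := by
  intro x hx h h0 hhH'
  obtain ⟨hcons, hlip⟩ := hftil x hx
  have hR'pos : 0 < R' := by rw [hR']; exact lt_max_of_lt_right (by linarith)
  have hRR' : R ≤ R' := by rw [hR']; exact le_max_left _ _
  have h10L : 10 * L ≤ R' := by rw [hR']; exact le_max_right _ _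
  have hC₂pos : (0:ℝ) < C₁ + 1/5 := by linarith
  have hhH : h < H := lt_of_lt_of_le hhH' (by rw [hH']; exact min_le_left _ _)
  have hh10 : h ≤ 1 / (10 * L) :=
    (lt_of_lt_of_le hhH' (by rw [hH']; exact le_trans (min_le_right _ _) (min_le_left _ _))).le
  have hh6 : h ≤ 1 / (6 * (C₁ + 1/5) * R') := by
    refine (lt_of_lt_of_le hhH' ?_).le
    rw [hH']
    exact le_trans (min_le_right _ _) (le_trans (min_le_right _ _) (min_le_left _ _))
  have hLh : h * (10 * L) ≤ 1 := by rwa [le_div_iff₀ (by positivity)] at hh10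
  have h6 : h * (6 * (C₁ + 1/5) * R') ≤ 1 := by rwa [le_div_iff₀ (by positivity)] at hh6
  set N := ‖i x‖ with hNdef
  have hN : 0 ≤ N := norm_nonneg _
  set r := N / (6 * R') with hrdef
  have hr : 0 ≤ r := by positivity
  have memRx : InBall i R x x := by
    unfold InBall; simp only [sub_self, norm_zero]; positivity
  have memR : ∀ z, ‖z - x‖ ≤ r → InBall i R x z := by
    intro z hz
    unfold InBall
    refine le_trans hz ?_
    rw [hrdef]
    gcongr
    linarith
  obtain ⟨hLip, hconsh⟩ := hlip h h0 hhH
  have Fbound : ∀ y, ‖y - x‖ ≤ r → ‖ftil x y h‖ ≤ (C₁ + 1/5) * N := by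
    intro y hy
    have l1 : ‖ftil x y h - ftil x x h‖ ≤ L * ‖y - x‖ :=
      (hLip x y x memRx (memR y hy) memRx).2
    have l3 : ‖ftil x x 0‖ ≤ C₁ * N := by rw [hcons]; exact hfC x hx
    have hLr : L * r ≤ N / 60 := by
      rw [hrdef, show L * (N / (6 * R')) = (L * N) / (6 * R') from by ring,
        div_le_div_iff₀ (by positivity) (by norm_num)]
      nlinarith [mul_nonneg hN (sub_nonneg.2 h10L)]
    have hLhN : L * h * N ≤ N / 10 := by nlinarith
    calc ‖ftil x y h‖
        = ‖(ftil x y h - ftil x x h) + (ftil x x h - ftil x x 0) + ftil x x 0‖ := by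
          congr 1; abel
      _ ≤ ‖ftil x y h - ftil x x h‖ + ‖ftil x x h - ftil x x 0‖ + ‖ftil x x 0‖ :=
          norm_add₃_le
      _ ≤ L * ‖y - x‖ + L * h * N + C₁ * N := add_le_add (add_le_add l1 hconsh) l3
      _ ≤ L * r + N / 10 + C₁ * N := by
          have := mul_le_mul_of_nonneg_left hy hL.le
          linarith
      _ ≤ (C₁ + 1/5) * N := by linarith
  have Tmaps : ∀ y, ‖y - x‖ ≤ r → ‖(x + h • ftil x y h) - x‖ ≤ r := by
    intro y hy
    have heq : ‖(x + h • ftil x y h) - x‖ = h * ‖ftil x y h‖ := by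
      rw [add_sub_cancel_left, norm_smul, Real.norm_eq_abs, abs_of_nonneg h0]
    rw [heq, hrdef, le_div_iff₀ (by positivity)]
    have hF := Fbound y hy
    nlinarith [mul_le_mul_of_nonneg_left hF h0]
  have Contr : ∀ y z, ‖y - x‖ ≤ r → ‖z - x‖ ≤ r →
      ‖ftil x y h - ftil x z h‖ ≤ L * ‖y - z‖ := fun y z hy hz =>
    (hLip x y z memRx (memR y hy) (memR z hz)).2
  -- key contraction estimate for the map `y ↦ x + h • ftil x y h`
  have key : ∀ y z, ‖y - x‖ ≤ r → ‖z - x‖ ≤ r →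
      ‖(x + h • ftil x y h) - (x + h • ftil x z h)‖ ≤ (1/2) * ‖y - z‖ := by
    intro y z hy hz
    have heq : (x + h • ftil x y h) - (x + h • ftil x z h)
        = h • (ftil x y h - ftil x z h) := by
      module
    rw [heq, norm_smul, Real.norm_eq_abs, abs_of_nonneg h0]
    have hc := Contr y z hy hz
    nlinarith [mul_le_mul_of_nonneg_left hc h0, norm_nonneg (y - z)]
  -- Banach fixed point on the closed ball
  set S := Metric.closedBall x r with hSdef
  haveI : Nonempty S := ⟨⟨x, Metric.mem_closedBall_self hr⟩⟩
  haveI : CompleteSpace S := completeSpace_coe_iff_isComplete.2 Metric.isClosed_closedBall.isComplete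
  have memS : ∀ z : EuclideanSpace ℝ (Fin d), z ∈ S ↔ ‖z - x‖ ≤ r := by
    intro z; rw [hSdef, Metric.mem_closedBall, dist_eq_norm]
  set T : S → S := fun y => ⟨x + h • ftil x y.1 h, (memS _).2 (Tmaps y.1 ((memS _).1 y.2))⟩
    with hTdef
  have hT : ContractingWith (1/2 : NNReal) T := by
    constructor
    · rw [← NNReal.coe_lt_coe]; norm_num
    · apply LipschitzWith.of_dist_le_mul
      intro a b
      simp only [Subtype.dist_eq, dist_eq_norm]
      have hkey := key a.1 b.1 ((memS _).1 a.2) ((memS _).1 b.2)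
      have hcoe : ((1/2 : NNReal) : ℝ) = 1/2 := by norm_num
      rw [hcoe]
      exact hkey
  set y₀ : S := hT.fixedPoint T with hy₀def
  have hfix : T y₀ = y₀ := hT.fixedPoint_isFixedPt
  have hfix' : x + h • ftil x y₀.1 h = y₀.1 := congrArg Subtype.val hfix
  refine ⟨y₀.1, ⟨?_, hfix'.symm⟩, ?_⟩
  · exact (memS _).1 y₀.2
  · rintro z ⟨hzball, hzeq⟩
    have hzb : ‖z - x‖ ≤ r := hzball
    have hyb : ‖y₀.1 - x‖ ≤ r := (memS _).1 y₀.2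
    have : ‖z - y₀.1‖ ≤ (1/2) * ‖z - y₀.1‖ := by
      have := key z y₀.1 hzb hyb
      rwa [← hzeq, hfix'] at this
    have : ‖z - y₀.1‖ ≤ 0 := by linarith
    have := le_antisymm this (norm_nonneg _)
    rwa [norm_sub_eq_zero_iff] at this
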